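/- Let ρ_{ABC} be a tripartite quantum state and M ∈ L(H_C) with M†M ≤ id_C. Let ρ̂_{ABC} = M ρ_{ABC} M† / Tr(M ρ_{ABC} M†). Then the conditional min-entropy satisfies H_min(A|B)_ρ̂ ≥ H_min(A|B)_ρ − log(1 / Tr(M ρ_{ABC} M†)). -/

import Mathlib

open scoped BigOperators Kronecker ComplexOrder Matrix

/-- The Schatten 1-norm (trace norm) of a complex matrix. -/
noncomputable def traceNorm {ι : Type*} [Fintype ι] [DecidableEq ι] (X : Matrix ι ι ℂ) : ℝ :=
  ((Matrix.posSemidef_conjTranspose_mul_self X).1.eigenvectorUnitary.1 *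
    Matrix.diagonal (fun i => ((√((Matrix.posSemidef_conjTranspose_mul_self X).1.eigenvalues i) : ℝ) : ℂ)) *
    (star (Matrix.posSemidef_conjTranspose_mul_self X).1.eigenvectorUnitary : Matrix ι ι ℂ)).trace.re

/-- Positive-semidefinite square root (junk value `0` off the PSD cone). -/
noncomputable def psqrt {ι : Type*} [Fintype ι] [DecidableEq ι] (X : Matrix ι ι ℂ) :
    Matrix ι ι ℂ :=
  open scoped Classical in
  if h : X.PosSemidef then h.1.eigenvectorUnitary.1 *
    Matrix.diagonal (fun i => ((√(h.1.eigenvalues i) : ℝ) : ℂ)) *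
    (star h.1.eigenvectorUnitary : Matrix ι ι ℂ) else 0

/-- Max-divergence `D_max(ρ‖σ) = inf {λ : ρ ≤ 2^λ σ}`. -/
noncomputable def dMax {ι : Type*} [Fintype ι] (ρ σ : Matrix ι ι ℂ) : ℝ :=
  sInf {l : ℝ | (((2:ℝ) ^ l) • σ - ρ).PosSemidef}

/-- Conditional min-entropy `H_min(A|B)_ρ = sup {r | ∃ state σ_B, ρ ≤ 2^{-r}(id_A ⊗ σ_B)}`. -/
noncomputable def condHmin {A B : Type*} [Fintype A] [Fintype B] [DecidableEq A] [DecidableEq B]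
    (ρ : Matrix (A × B) (A × B) ℂ) : ℝ :=
  sSup {r : ℝ | ∃ σ : Matrix B B ℂ, σ.PosSemidef ∧ σ.trace = 1 ∧
    (((2:ℝ) ^ (-r)) • ((1 : Matrix A A ℂ) ⊗ₖ σ) - ρ).PosSemidef}

/-- Partial trace over the second tensor factor. -/
noncomputable def ptraceRight {A B : Type*} [Fintype B] (ρ : Matrix (A × B) (A × B) ℂ) :
    Matrix A A ℂ := Matrix.of fun a a' => ∑ b, ρ (a, b) (a', b)

/-- The maximally mixed state on `ι`. -/
noncomputable def mmix (ι : Type*) [Fintype ι] [DecidableEq ι] : Matrix ι ι ℂ :=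
  (Fintype.card ι : ℂ)⁻¹ • 1

namespace Stmt10Aux

open Matrix

/-- The embedding matrix picking out the `c`-th slice. -/
noncomputable def emb (D : Type*) {C : Type*} [DecidableEq D] [DecidableEq C] (c : C) :
    Matrix D (D × C) ℂ := Matrix.of fun d p => if p = (d, c) then 1 else 0

lemma emb_conj_apply {D C : Type*} [Fintype D] [Fintype C] [DecidableEq D] [DecidableEq C]
    (ρ : Matrix (D × C) (D × C) ℂ) (c : C) (d d' : D) :
    (emb D c * ρ * (emb D c)ᴴ) d d' = ρ (d, c) (d', c) := by
  simp [emb, Matrix.mul_apply, conjTranspose_apply, Fintype.sum_prod_type, Prod.ext_iff,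
    apply_ite, ite_and]

lemma ptraceRight_eq_sum_emb {D C : Type*} [Fintype D] [Fintype C] [DecidableEq D] [DecidableEq C]
    (ρ : Matrix (D × C) (D × C) ℂ) :
    ptraceRight ρ = ∑ c : C, emb D c * ρ * (emb D c)ᴴ := by
  ext d d'
  simp [ptraceRight, Matrix.sum_apply, emb_conj_apply]

lemma posSemidef_sum {n ι : Type*} [Fintype n] (s : Finset ι) (f : ι → Matrix n n ℂ)
    (h : ∀ i ∈ s, (f i).PosSemidef) : (∑ i ∈ s, f i).PosSemidef := by
  classical
  induction s using Finset.induction with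
  | empty => simpa using Matrix.PosSemidef.zero
  | insert a s hnot ih =>
      rw [Finset.sum_insert hnot]
      exact ((h a (Finset.mem_insert_self a s)).add
        (ih fun i hi => h i (Finset.mem_insert_of_mem hi)))

lemma ptraceRight_posSemidef {D C : Type*} [Fintype D] [Fintype C] [DecidableEq D] [DecidableEq C]
    {ρ : Matrix (D × C) (D × C) ℂ} (h : ρ.PosSemidef) : (ptraceRight ρ).PosSemidef := by
  rw [ptraceRight_eq_sum_emb]
  exact posSemidef_sum _ _ fun c _ => h.mul_mul_conjTranspose_same (emb D c)

lemma ptraceRight_mul_kron_apply {D C : Type*} [Fintype D] [Fintype C] [DecidableEq D]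
    [DecidableEq C] (ρ : Matrix (D × C) (D × C) ℂ) (N : Matrix C C ℂ) (d d' : D) :
    ptraceRight (ρ * ((1 : Matrix D D ℂ) ⊗ₖ N)) d d' =
      ∑ c1, ∑ c2, N c2 c1 * ρ (d, c1) (d', c2) := by
  simp only [ptraceRight, of_apply, Matrix.mul_apply, kroneckerMap_apply, one_apply,
    Fintype.sum_prod_type, mul_ite, ite_mul, one_mul, zero_mul, mul_zero, mul_one,
    Finset.sum_ite_irrel, Finset.sum_const_zero, Finset.sum_ite_eq, Finset.sum_ite_eq',
    Finset.mem_univ, if_true]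
  exact Finset.sum_congr rfl fun c1 _ => Finset.sum_congr rfl fun c2 _ => mul_comm _ _

lemma ptraceRight_conj_kron_apply {D C : Type*} [Fintype D] [Fintype C] [DecidableEq D]
    [DecidableEq C] (ρ : Matrix (D × C) (D × C) ℂ) (P Q : Matrix C C ℂ) (d d' : D) :
    ptraceRight (((1 : Matrix D D ℂ) ⊗ₖ P) * ρ * ((1 : Matrix D D ℂ) ⊗ₖ Q)) d d' =
      ∑ c1, ∑ c2, (Q * P) c2 c1 * ρ (d, c1) (d', c2) := by
  simp only [ptraceRight, of_apply, Matrix.mul_apply, kroneckerMap_apply, one_apply,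
    Fintype.sum_prod_type, mul_ite, ite_mul, one_mul, zero_mul, mul_zero, mul_one,
    Finset.sum_ite_irrel, Finset.sum_const_zero, Finset.sum_ite_eq, Finset.sum_ite_eq',
    Finset.mem_univ, if_true]
  simp only [Finset.sum_mul, Finset.mul_sum]
  rw [Finset.sum_comm]
  conv_rhs => rw [Finset.sum_comm]
  refine Finset.sum_congr rfl fun b _ => ?_
  rw [Finset.sum_comm]
  exact Finset.sum_congr rfl fun u _ => Finset.sum_congr rfl fun v _ => by ring

lemma ptraceRight_sub {D C : Type*} [Fintype D] [Fintype C]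
    (x y : Matrix (D × C) (D × C) ℂ) :
    ptraceRight (x - y) = ptraceRight x - ptraceRight y := by
  ext d d'; simp [ptraceRight, Finset.sum_sub_distrib]

lemma ptraceRight_smul {D C : Type*} [Fintype D] [Fintype C]
    (c : ℂ) (x : Matrix (D × C) (D × C) ℂ) :
    ptraceRight (c • x) = c • ptraceRight x := by
  ext d d'; simp [ptraceRight, Finset.mul_sum]

lemma ptraceRight_trace {D C : Type*} [Fintype D] [Fintype C]
    (x : Matrix (D × C) (D × C) ℂ) : (ptraceRight x).trace = x.trace := by
  simp [ptraceRight, Matrix.trace, Matrix.diag, Fintype.sum_prod_type]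

lemma psd_smul_real {n : Type*} [Fintype n] {Y : Matrix n n ℂ} (hY : Y.PosSemidef)
    {r : ℝ} (hr : 0 ≤ r) : (r • Y).PosSemidef := by
  have hcoe : r • Y = (r : ℂ) • Y := by
    ext i j; simp [Complex.real_smul]
  rw [hcoe]
  refine ⟨?_, fun x => ?_⟩
  · show ((r : ℂ) • Y)ᴴ = _
    rw [conjTranspose_smul, hY.1, Complex.star_def, Complex.conj_ofReal]
  · exact (hY.smul (Complex.zero_le_real.2 hr)).2 x

lemma psd_trace_nonneg {n : Type*} [Fintype n] {M : Matrix n n ℂ} (h : M.PosSemidef) :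
    0 ≤ M.trace := by
  classical
  exact h.trace_nonneg

lemma psd_le_trace_one {n : Type*} [Fintype n] [DecidableEq n] {T : Matrix n n ℂ}
    (hT : T.PosSemidef) : (T.trace • (1 : Matrix n n ℂ) - T).PosSemidef := by
  have hH := hT.1
  have hspec := hH.spectral_theorem
  rw [Unitary.conjStarAlgAut_apply] at hspec
  set U : Matrix n n ℂ := (hH.eigenvectorUnitary : Matrix n n ℂ) with hU
  have hUU : U * star U = 1 := Matrix.mem_unitaryGroup_iff.mp hH.eigenvectorUnitary.2
  have hUU' : star U * U = 1 := Matrix.mem_unitaryGroup_iff'.mp hH.eigenvectorUnitary.2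
  have htr : T.trace = ∑ i, (hH.eigenvalues i : ℂ) := by
    conv_lhs => rw [hspec]
    rw [Matrix.trace_mul_cycle, hUU', one_mul, Matrix.trace_diagonal]
    rfl
  have key : T.trace • (1 : Matrix n n ℂ) - T =
      U * Matrix.diagonal (fun i => T.trace - (hH.eigenvalues i : ℂ)) * star U := by
    calc T.trace • (1 : Matrix n n ℂ) - T
        = U * (T.trace • 1 - Matrix.diagonal (RCLike.ofReal ∘ hH.eigenvalues)) * star U := by
          rw [Matrix.mul_sub, Matrix.sub_mul, Matrix.mul_smul, Matrix.smul_mul, mul_one, hUU,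
            ← hspec]
      _ = _ := by
          congr 2
          rw [Matrix.smul_one_eq_diagonal, Matrix.diagonal_sub]
          rfl
  rw [key, Matrix.star_eq_conjTranspose]
  refine Matrix.PosSemidef.mul_mul_conjTranspose_same ?_ U
  refine Matrix.PosSemidef.diagonal fun i => ?_
  show (0 : ℂ) ≤ _
  rw [htr]
  have hcast : (∑ j, (hH.eigenvalues j : ℂ)) - (hH.eigenvalues i : ℂ)
      = (((∑ j, hH.eigenvalues j) - hH.eigenvalues i : ℝ) : ℂ) := by push_cast; ring
  rw [hcast, Complex.zero_le_real]
  have := Finset.single_le_sum (f := hH.eigenvalues)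
    (fun j _ => hT.eigenvalues_nonneg j) (Finset.mem_univ i)
  linarith

lemma one_kron_conjTranspose {D C : Type*} [Fintype D] [Fintype C] [DecidableEq D]
    (M : Matrix C C ℂ) :
    ((1 : Matrix D D ℂ) ⊗ₖ M)ᴴ = (1 : Matrix D D ℂ) ⊗ₖ Mᴴ := by
  ext ⟨d, c⟩ ⟨d', c'⟩
  by_cases h : d = d' <;>
    simp [Matrix.conjTranspose_apply, Matrix.kroneckerMap_apply, Matrix.one_apply, h, eq_comm]

/-- Membership: `-logb 2 (card B)` is always achievable for a state. -/
lemma mem_condHmin_set {A B : Type*} [Fintype A] [Fintype B] [DecidableEq A] [DecidableEq B]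
    [Nonempty B] {T : Matrix (A × B) (A × B) ℂ} (hT : T.PosSemidef) (htr : T.trace = 1) :
    (-Real.logb 2 (Fintype.card B)) ∈ {r : ℝ | ∃ σ : Matrix B B ℂ, σ.PosSemidef ∧ σ.trace = 1 ∧
      (((2:ℝ) ^ (-r)) • ((1 : Matrix A A ℂ) ⊗ₖ σ) - T).PosSemidef} := by
  have hcB : (0 : ℝ) < Fintype.card B := by
    exact_mod_cast Fintype.card_pos
  refine ⟨((Fintype.card B : ℝ)⁻¹) • (1 : Matrix B B ℂ), psd_smul_real Matrix.PosSemidef.one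
    (by positivity), ?_, ?_⟩
  · rw [Matrix.trace_smul, Matrix.trace_one]
    rw [show ((Fintype.card B : ℝ)⁻¹ • (Fintype.card B : ℂ)) =
      (((Fintype.card B : ℝ)⁻¹ * (Fintype.card B : ℝ) : ℝ) : ℂ) by push_cast [Complex.real_smul]; ring]
    rw [inv_mul_cancel₀ hcB.ne']
    norm_num
  · have h2 : (2:ℝ) ^ (-(-Real.logb 2 (Fintype.card B))) = (Fintype.card B : ℝ) := by
      rw [neg_neg, Real.rpow_logb (by norm_num) (by norm_num) hcB]
    rw [h2]
    have hker : (Fintype.card B : ℝ) • ((1 : Matrix A A ℂ) ⊗ₖ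
        (((Fintype.card B : ℝ)⁻¹) • (1 : Matrix B B ℂ))) = (1 : Matrix (A × B) (A × B) ℂ) := by
      rw [Matrix.kronecker_smul, smul_smul, mul_inv_cancel₀ hcB.ne', one_smul,
        Matrix.one_kronecker_one]
    rw [hker]
    have := psd_le_trace_one hT
    rwa [htr, one_smul] at this

/-- Boundedness of the condHmin feasible set. -/
lemma bddAbove_condHmin_set {A B : Type*} [Fintype A] [Fintype B] [DecidableEq A] [DecidableEq B]
    [Nonempty A] {T : Matrix (A × B) (A × B) ℂ} (htr : T.trace = 1) :
    BddAbove {r : ℝ | ∃ σ : Matrix B B ℂ, σ.PosSemidef ∧ σ.trace = 1 ∧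
      (((2:ℝ) ^ (-r)) • ((1 : Matrix A A ℂ) ⊗ₖ σ) - T).PosSemidef} := by
  have hcA : (0 : ℝ) < Fintype.card A := by exact_mod_cast Fintype.card_pos
  refine ⟨Real.logb 2 (Fintype.card A), ?_⟩
  rintro r ⟨σ, hσ, hσ1, hpsd⟩
  have h0 := psd_trace_nonneg hpsd
  have htrval : (((2:ℝ) ^ (-r)) • ((1 : Matrix A A ℂ) ⊗ₖ σ) - T).trace
      = ((((2:ℝ) ^ (-r)) * (Fintype.card A : ℝ) - 1 : ℝ) : ℂ) := by
    rw [Matrix.trace_sub, Matrix.trace_smul, Matrix.trace_kronecker, Matrix.trace_one, hσ1,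
      htr, mul_one]
    push_cast [Complex.real_smul]
    ring
  rw [htrval, Complex.zero_le_real] at h0
  have h1 : (2:ℝ) ^ (-Real.logb 2 (Fintype.card A)) ≤ (2:ℝ) ^ (-r) := by
    rw [Real.rpow_neg (by norm_num), Real.rpow_logb (by norm_num) (by norm_num) hcA]
    rw [inv_le_iff_one_le_mul₀ hcA]
    linarith
  have h2 := (Real.rpow_le_rpow_left_iff (by norm_num : (1:ℝ) < 2)).mp h1
  linarith

end Stmt10Aux

/-- Min-entropy decrease under a measurement operator on a third register
(Fact 13 / `fact:minentropydecrease`): for a tripartite state `ρ_{ABC}` and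
`M` with `M†M ≤ 1` acting on `C`, the renormalised post-measurement state
`ρ̂ = MρM†/Tr(MρM†)` satisfies
`H_min(A|B)_ρ̂ ≥ H_min(A|B)_ρ − log(1/Tr(MρM†))`. -/
theorem stmt10 {A B C : Type} [Fintype A] [DecidableEq A] [Fintype B] [DecidableEq B]
    [Fintype C] [DecidableEq C]
    (ρ : Matrix ((A × B) × C) ((A × B) × C) ℂ)
    (hρ : ρ.PosSemidef) (hρ1 : ρ.trace = 1)
    (M : Matrix C C ℂ) (hM : ((1 : Matrix C C ℂ) - Mᴴ * M).PosSemidef)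
    (τ : ℝ) (hτ : 0 < τ)
    (hτeq : ((((1 : Matrix (A × B) (A × B) ℂ) ⊗ₖ M) * ρ *
        ((1 : Matrix (A × B) (A × B) ℂ) ⊗ₖ M)ᴴ).trace = (τ : ℂ))) :
    condHmin (ptraceRight ρ) - Real.logb 2 (1 / τ) ≤
      condHmin (ptraceRight ((τ : ℂ)⁻¹ •
        (((1 : Matrix (A × B) (A × B) ℂ) ⊗ₖ M) * ρ *
          ((1 : Matrix (A × B) (A × B) ℂ) ⊗ₖ M)ᴴ))) := by
  classical
  open Matrix Stmt10Aux in
  -- nonemptiness of the index types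
  have hne : Nonempty ((A × B) × C) := by
    rcases isEmpty_or_nonempty ((A × B) × C) with h | h
    · rw [Matrix.trace] at hρ1
      simp at hρ1
    · exact h
  have hneAB : Nonempty (A × B) := hne.elim fun p => ⟨p.1⟩
  have hneA : Nonempty A := hneAB.elim fun p => ⟨p.1⟩
  have hneB : Nonempty B := hneAB.elim fun p => ⟨p.2⟩
  set X := (((1 : Matrix (A × B) (A × B) ℂ) ⊗ₖ M) * ρ *
    ((1 : Matrix (A × B) (A × B) ℂ) ⊗ₖ M)ᴴ) with hX
  set T₁ := ptraceRight ρ with hT₁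
  set T₂ := ptraceRight ((τ : ℂ)⁻¹ • X) with hT₂
  set S₁ := {r : ℝ | ∃ σ : Matrix B B ℂ, σ.PosSemidef ∧ σ.trace = 1 ∧
    (((2:ℝ) ^ (-r)) • ((1 : Matrix A A ℂ) ⊗ₖ σ) - T₁).PosSemidef} with hS₁
  set S₂ := {r : ℝ | ∃ σ : Matrix B B ℂ, σ.PosSemidef ∧ σ.trace = 1 ∧
    (((2:ℝ) ^ (-r)) • ((1 : Matrix A A ℂ) ⊗ₖ σ) - T₂).PosSemidef} with hS₂
  have hcond₁ : condHmin T₁ = sSup S₁ := rfl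
  have hcond₂ : condHmin T₂ = sSup S₂ := rfl
  -- X is PSD
  have hXpsd : X.PosSemidef := hρ.mul_mul_conjTranspose_same _
  -- traces
  have htr₁ : T₁.trace = 1 := by rw [hT₁, ptraceRight_trace, hρ1]
  have htr₂ : T₂.trace = 1 := by
    rw [hT₂, ptraceRight_trace, Matrix.trace_smul, hτeq, smul_eq_mul,
      inv_mul_cancel₀ (by exact_mod_cast hτ.ne')]
  have hT₁psd : T₁.PosSemidef := ptraceRight_posSemidef hρ
  -- key: T₁ - ptraceRight X is PSD
  have hdiff : (T₁ - ptraceRight X).PosSemidef := by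
    open scoped MatrixOrder in
    set W := CFC.sqrt (1 - Mᴴ * M) with hW
    open scoped MatrixOrder in
    have hWpsd : W.PosSemidef := (CFC.sqrt_nonneg _).posSemidef
    open scoped MatrixOrder in
    have hWW : W * W = 1 - Mᴴ * M := CFC.sqrt_mul_sqrt_self _ hM.nonneg
    have hWH : Wᴴ = W := hWpsd.1
    have heq : T₁ - ptraceRight X =
        ptraceRight (((1 : Matrix (A × B) (A × B) ℂ) ⊗ₖ W) * ρ *
          ((1 : Matrix (A × B) (A × B) ℂ) ⊗ₖ W)) := by
      ext d d'
      rw [hX, one_kron_conjTranspose]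
      rw [Matrix.sub_apply]
      rw [ptraceRight_conj_kron_apply ρ M Mᴴ d d', ptraceRight_conj_kron_apply ρ W W d d']
      have hT₁app : T₁ d d' = ∑ c1, ∑ c2,
          (1 : Matrix C C ℂ) c2 c1 * ρ (d, c1) (d', c2) := by
        have := ptraceRight_mul_kron_apply ρ (1 : Matrix C C ℂ) d d'
        rw [Matrix.one_kronecker_one, mul_one] at this
        rw [hT₁, this]
      rw [hT₁app, hWW]
      rw [← Finset.sum_sub_distrib]
      refine Finset.sum_congr rfl fun c1 _ => ?_
      rw [← Finset.sum_sub_distrib]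
      refine Finset.sum_congr rfl fun c2 _ => ?_
      rw [Matrix.sub_apply]
      ring
    rw [heq]
    have : (((1 : Matrix (A × B) (A × B) ℂ) ⊗ₖ W) * ρ *
        ((1 : Matrix (A × B) (A × B) ℂ) ⊗ₖ W)).PosSemidef := by
      have := hρ.mul_mul_conjTranspose_same ((1 : Matrix (A × B) (A × B) ℂ) ⊗ₖ W)
      rwa [one_kron_conjTranspose, hWH] at this
    exact ptraceRight_posSemidef this
  -- membership transfer
  have hmap : ∀ r ∈ S₁, (r + Real.logb 2 τ) ∈ S₂ := by
    rintro r ⟨σ, hσpsd, hσ1, hpsd⟩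
    refine ⟨σ, hσpsd, hσ1, ?_⟩
    have hsum : ((((2:ℝ) ^ (-r)) • ((1 : Matrix A A ℂ) ⊗ₖ σ) - T₁)
        + (T₁ - ptraceRight X)).PosSemidef := hpsd.add hdiff
    have hsum' : (((2:ℝ) ^ (-r)) • ((1 : Matrix A A ℂ) ⊗ₖ σ) - ptraceRight X).PosSemidef := by
      have : (((2:ℝ) ^ (-r)) • ((1 : Matrix A A ℂ) ⊗ₖ σ) - T₁) + (T₁ - ptraceRight X)
          = ((2:ℝ) ^ (-r)) • ((1 : Matrix A A ℂ) ⊗ₖ σ) - ptraceRight X := by abel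
      rwa [this] at hsum
    have hfinal := psd_smul_real hsum' (r := τ⁻¹) (by positivity)
    have hrw : τ⁻¹ • (((2:ℝ) ^ (-r)) • ((1 : Matrix A A ℂ) ⊗ₖ σ) - ptraceRight X)
        = ((2:ℝ) ^ (-(r + Real.logb 2 τ))) • ((1 : Matrix A A ℂ) ⊗ₖ σ) - T₂ := by
      rw [smul_sub, smul_smul]
      congr 1
      · congr 1
        rw [neg_add, Real.rpow_add (by norm_num), Real.rpow_neg (by norm_num) (Real.logb 2 τ),
          Real.rpow_logb (by norm_num) (by norm_num) hτ]
        ring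
      · rw [hT₂, ptraceRight_smul]
        ext i j
        simp [Complex.real_smul]
    rwa [hrw] at hfinal
  -- nonemptiness and boundedness
  have hS₁ne : S₁.Nonempty := ⟨_, mem_condHmin_set hT₁psd htr₁⟩
  have hS₂bdd : BddAbove S₂ := bddAbove_condHmin_set htr₂
  -- conclude
  have hlog : Real.logb 2 (1 / τ) = -Real.logb 2 τ := by
    rw [one_div, Real.logb_inv]
  rw [hcond₁, hcond₂, hlog]
  have hle : sSup S₁ ≤ sSup S₂ - Real.logb 2 τ := by
    refine csSup_le hS₁ne fun r hr => ?_
    have := le_csSup hS₂bdd (hmap r hr)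
    linarith
  linarith
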